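/- Let p > 1, F_p(ζ) = |ζ|^p on ℂ, and I_p ξ = ξ + (1 − 2/p) ξ̄ for ξ ∈ ℂ. Viewing F_p as a function on ℝ², for every ζ ≠ 0 and every ξ ∈ ℂ, the second derivative (Hessian quadratic/bilinear action) of F_p at ζ applied to the direction ξ satisfies: d²F_p(ζ)[ξ] = p²/2 · |ζ|^{p−2} · (sign ζ · I_p(sign ζ̄ · ξ)), where both sides are interpreted via the identification of ℂ with ℝ² sending α + iβ to (α, β). -/

import Mathlib

noncomputable def csign (ζ : ℂ) : ℂ := if ζ = 0 then 0 else ζ / (‖ζ‖ : ℂ)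

noncomputable def Ip (p : ℝ) (ξ : ℂ) : ℂ := ξ + ((1 - 2 / p : ℝ) : ℂ) * (starRingEnd ℂ) ξ

lemma aux_hasFDerivAt (q : ℝ) {ζ : ℂ} (hζ : ζ ≠ 0) :
    HasFDerivAt (fun z : ℂ => ‖z‖ ^ q) ((q * ‖ζ‖ ^ (q - 2)) • innerSL ℝ ζ) ζ := by
  have h0 : ‖ζ‖ ^ 2 ≠ 0 := pow_ne_zero 2 (norm_ne_zero_iff.mpr hζ)
  have h := ((hasStrictFDerivAt_norm_sq ζ).hasFDerivAt).rpow_const (p := q / 2) (Or.inl h0)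
  have hfun : (fun z : ℂ => (‖z‖ ^ 2) ^ (q / 2)) = fun z : ℂ => ‖z‖ ^ q := by
    ext z
    rw [← Real.rpow_natCast ‖z‖ 2, ← Real.rpow_mul (norm_nonneg z)]
    congr 1
    push_cast; ring
  have hexp : (‖ζ‖ ^ 2 : ℝ) ^ (q / 2 - 1) = ‖ζ‖ ^ (q - 2) := by
    rw [← Real.rpow_natCast ‖ζ‖ 2, ← Real.rpow_mul (norm_nonneg ζ)]
    congr 1
    push_cast; ring
  have hder : (q / 2 * (‖ζ‖ ^ 2) ^ (q / 2 - 1)) • (2 • innerSL ℝ ζ)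
      = (q * ‖ζ‖ ^ (q - 2)) • innerSL ℝ ζ := by
    rw [hexp]
    ext w
    simp [smul_eq_mul]
    ring
  rw [hfun, hder] at h
  exact h

lemma key_csign (p : ℝ) (hp : 1 < p) (ζ : ℂ) (hζ : ζ ≠ 0) (ξ : ℂ) :
    csign ζ * Ip p (csign ((starRingEnd ℂ) ζ) * ξ)
      = ξ + (((1 - 2/p)/(ζ.re^2+ζ.im^2) : ℝ):ℂ) * (ζ * ζ * (starRingEnd ℂ) ξ) := by
  set r := ‖ζ‖ with hrdef
  have hr0 : (r:ℂ) ≠ 0 := by exact_mod_cast (norm_pos_iff.mpr hζ).ne'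
  have hp0 : (p:ℂ) ≠ 0 := by exact_mod_cast (by linarith : p ≠ 0)
  have hN : (0:ℝ) < ζ.re^2 + ζ.im^2 := by
    have := Complex.normSq_pos.mpr hζ
    simpa [Complex.normSq_apply, sq] using this
  have hN0 : ((ζ.re^2+ζ.im^2 : ℝ):ℂ) ≠ 0 := by exact_mod_cast hN.ne'
  have hmc : ζ * (starRingEnd ℂ) ζ = ((ζ.re^2+ζ.im^2 : ℝ):ℂ) := by
    rw [Complex.mul_conj]
    push_cast [Complex.normSq_apply]
    ring
  have hrr : ((r:ℂ) * (r:ℂ)) = ((ζ.re^2+ζ.im^2 : ℝ):ℂ) := by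
    rw [← hmc, Complex.mul_conj]
    norm_cast
    rw [← Complex.sq_norm]
    ring
  have hconj : (starRingEnd ℂ) ζ ≠ 0 := by simpa using hζ
  have e1 : csign ζ * Ip p (csign ((starRingEnd ℂ) ζ) * ξ)
      = (ζ * (starRingEnd ℂ) ζ * ξ + ((1 - 2/p : ℝ):ℂ) * (ζ * ζ * (starRingEnd ℂ) ξ))
          / ((r:ℂ) * (r:ℂ)) := by
    simp only [csign, if_neg hζ, if_neg hconj, Complex.norm_conj, Ip, map_mul, map_div₀,
      Complex.conj_conj, Complex.conj_ofReal, ← hrdef]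
    field_simp [hr0, hp0]
  have hN0' : ((ζ.re:ℂ)^2+(ζ.im:ℂ)^2) ≠ 0 := by push_cast at hN0; exact hN0
  rw [e1, hmc, hrr]
  push_cast
  field_simp [hN0', hp0]

theorem stmt10 (p : ℝ) (hp : 1 < p) (ζ : ℂ) (hζ : ζ ≠ 0) (ξ ξ' : ℂ) :
    iteratedFDeriv ℝ 2 (fun z : ℂ => ‖z‖ ^ p) ζ ![ξ, ξ'] =
      (((p ^ 2 / 2 * ‖ζ‖ ^ (p - 2) : ℝ) :ℂ) *
          (csign ζ * Ip p (csign ((starRingEnd ℂ) ζ) * ξ)) * (starRingEnd ℂ) ξ').re := by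
  have habs : (fun z : ℂ => ‖z‖ ^ p) = fun z : ℂ => ‖z‖ ^ p := by
    rfl
  have hfd : (fderiv ℝ (fun z : ℂ => ‖z‖ ^ p)) = fun z => (p * ‖z‖ ^ (p - 2)) • innerSL ℝ z :=
    funext fun z => fderiv_norm_rpow z hp
  have hc := (aux_hasFDerivAt (p - 2) hζ).const_mul p
  rw [smul_smul, show p - 2 - 2 = p - 4 by ring] at hc
  have hv : HasFDerivAt (fun z : ℂ => innerSL ℝ z) (innerSL ℝ (E := ℂ)) ζ :=
    (innerSL ℝ (E := ℂ)).hasFDerivAt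
  have hg := hc.smul hv
  have h2 : iteratedFDeriv ℝ 2 (fun z : ℂ => ‖z‖ ^ p) ζ ![ξ, ξ'] =
      fderiv ℝ (fderiv ℝ (fun z : ℂ => ‖z‖ ^ p)) ζ ξ ξ' := by
    rw [iteratedFDeriv_two_apply]
    rfl
  rw [habs, h2, hfd, (show HasFDerivAt (fun z : ℂ => (p * ‖z‖ ^ (p - 2)) • innerSL ℝ z) _ ζ from hg).fderiv, key_csign p hp ζ hζ ξ]
  simp only [ContinuousLinearMap.add_apply, ContinuousLinearMap.smul_apply,
    ContinuousLinearMap.smulRight_apply, innerSL_apply_apply, Complex.inner, smul_eq_mul]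
  -- now a real-coordinate identity
  have hr : (0:ℝ) < ‖ζ‖ := norm_pos_iff.mpr hζ
  have hN : (0:ℝ) < ζ.re^2 + ζ.im^2 := by
    have := Complex.normSq_pos.mpr hζ
    simpa [Complex.normSq_apply, sq] using this
  have hp0 : p ≠ 0 := by linarith
  have hA : ‖ζ‖ ^ (p-4) = ‖ζ‖ ^ (p-2) / (ζ.re^2+ζ.im^2) := by
    rw [show p - 4 = p - 2 - 2 by ring, Real.rpow_sub hr]
    congr 1
    rw [show (2:ℝ) = ((2:ℕ):ℝ) by norm_num, Real.rpow_natCast, Complex.sq_norm,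
      Complex.normSq_apply]
    ring
  rw [hA]
  set A := ‖ζ‖ ^ (p-2) with hAdef
  rw [show ((innerSL ℝ) ξ) ξ' = (ξ' * (starRingEnd ℂ) ξ).re from Complex.inner ξ ξ']
  simp only [Complex.mul_re, Complex.mul_im, Complex.add_re, Complex.add_im,
    Complex.ofReal_re, Complex.ofReal_im, Complex.conj_re, Complex.conj_im]
  field_simp
  ring
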